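/- Any G_r(3r-2k,3)-free r-partite r-uniform hypergraph with all r vertex parts of size q has at most 2q^k edges. -/

import Mathlib

open Finset

theorem multipartite_upper_bound (r k q : ℕ) (hk : 2 ≤ k) (hrk : k < r)
    (H : Finset (Finset (Fin r × Fin q)))
    (hpartite : ∀ A ∈ H, ∀ i : Fin r, (A.filter (fun x => x.1 = i)).card = 1)
    (hfree : ∀ A ∈ H, ∀ B ∈ H, ∀ C ∈ H, A ≠ B → A ≠ C → B ≠ C →
      3 * r - 2 * k + 1 ≤ (A ∪ B ∪ C).card) :
    H.card ≤ 2 * q ^ k := by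
  have hr : 0 < r := lt_of_le_of_lt (Nat.zero_le k) hrk
  rcases Nat.eq_zero_or_pos q with hq | hq
  · subst hq
    have hE : H = ∅ := by
      ext A
      simp only [Finset.notMem_empty, iff_false]
      intro hA
      have h1 := hpartite A hA ⟨0, hr⟩
      have h2 : (A.filter fun x => x.1 = (⟨0, hr⟩ : Fin r)) = ∅ :=
        Finset.eq_empty_of_isEmpty _
      rw [h2] at h1
      simp at h1
    simp [hE]
  · -- map each edge to its trace on the first k coordinates
    classical
    set f : Finset (Fin r × Fin q) → (Fin k → ℕ) :=
      fun A i => (A.filter (fun x => x.1 = Fin.castLE hrk.le i)).sup (fun x => (x.2 : ℕ))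
      with hf
    -- singleton fibers
    have hsing : ∀ A ∈ H, ∀ i : Fin r, ∃ a : Fin r × Fin q,
        a.1 = i ∧ A.filter (fun x => x.1 = i) = {a} := by
      intro A hA i
      obtain ⟨a, ha⟩ := Finset.card_eq_one.mp (hpartite A hA i)
      refine ⟨a, ?_, ha⟩
      have : a ∈ A.filter (fun x => x.1 = i) := ha ▸ Finset.mem_singleton_self a
      exact (Finset.mem_filter.mp this).2
    -- key: three edges with equal trace, union small
    have hkey : ∀ A ∈ H, ∀ B ∈ H, ∀ C ∈ H, f A = f B → f A = f C →
        (A ∪ B ∪ C).card ≤ 3 * r - 2 * k := by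
      intro A hA B hB C hC hAB hAC
      have hsum : (A ∪ B ∪ C).card
          = ∑ i : Fin r, ((A ∪ B ∪ C).filter (fun x => x.1 = i)).card :=
        Finset.card_eq_sum_card_fiberwise (f := fun x : Fin r × Fin q => x.1) (t := Finset.univ)
          (fun x _ => Finset.mem_univ _)
      have hterm : ∀ i : Fin r,
          ((A ∪ B ∪ C).filter (fun x => x.1 = i)).card
            ≤ if (i : ℕ) < k then 1 else 3 := by
        intro i
        rw [Finset.filter_union, Finset.filter_union]
        by_cases hik : (i : ℕ) < k
        · simp only [hik, if_true]
          obtain ⟨a, ha1, ha⟩ := hsing A hA i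
          obtain ⟨b, hb1, hb⟩ := hsing B hB i
          obtain ⟨c, hc1, hc⟩ := hsing C hC i
          have hi : Fin.castLE hrk.le (⟨(i : ℕ), hik⟩ : Fin k) = i := by
            ext; rfl
          have hfa : f A ⟨(i : ℕ), hik⟩ = (a.2 : ℕ) := by
            rw [hf]; simp only; rw [hi, ha, Finset.sup_singleton]
          have hfb : f B ⟨(i : ℕ), hik⟩ = (b.2 : ℕ) := by
            rw [hf]; simp only; rw [hi, hb, Finset.sup_singleton]
          have hfc : f C ⟨(i : ℕ), hik⟩ = (c.2 : ℕ) := by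
            rw [hf]; simp only; rw [hi, hc, Finset.sup_singleton]
          have hab : a = b := by
            have := hfa ▸ (hAB ▸ hfb)
            exact Prod.ext (ha1.trans hb1.symm) (Fin.val_injective this)
          have hac : a = c := by
            have := hfa ▸ (hAC ▸ hfc)
            exact Prod.ext (ha1.trans hc1.symm) (Fin.val_injective this)
          rw [ha, hb, hc, ← hab, ← hac]
          simp
        · simp only [hik, if_false]
          calc ((A.filter (fun x => x.1 = i)) ∪ (B.filter (fun x => x.1 = i))
                ∪ (C.filter (fun x => x.1 = i))).card
              ≤ ((A.filter (fun x => x.1 = i)) ∪ (B.filter (fun x => x.1 = i))).card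
                + (C.filter (fun x => x.1 = i)).card := Finset.card_union_le _ _
            _ ≤ (A.filter (fun x => x.1 = i)).card + (B.filter (fun x => x.1 = i)).card
                + (C.filter (fun x => x.1 = i)).card := by
                  exact Nat.add_le_add_right (Finset.card_union_le _ _) _
            _ = 3 := by
                  rw [hpartite A hA i, hpartite B hB i, hpartite C hC i]
      calc (A ∪ B ∪ C).card
          = ∑ i : Fin r, ((A ∪ B ∪ C).filter (fun x => x.1 = i)).card := hsum
        _ ≤ ∑ i : Fin r, if (i : ℕ) < k then 1 else 3 :=
            Finset.sum_le_sum (fun i _ => hterm i)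
        _ = 3 * r - 2 * k := by
            rw [Finset.sum_ite]
            have h1 : (Finset.univ.filter (fun i : Fin r => (i : ℕ) < k)).card = k := by
              have : (Finset.univ.filter (fun i : Fin r => (i : ℕ) < k))
                  = Finset.map (Fin.castLEEmb hrk.le) Finset.univ := by
                ext x
                simp only [Finset.mem_filter, Finset.mem_univ, true_and, Finset.mem_map,
                  Fin.castLEEmb_apply]
                constructor
                · intro h; exact ⟨⟨(x : ℕ), h⟩, by ext; rfl⟩
                · rintro ⟨y, rfl⟩; exact y.2
              rw [this, Finset.card_map, Finset.card_univ, Fintype.card_fin]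
            have h2 : (Finset.univ.filter (fun i : Fin r => ¬ (i : ℕ) < k)).card = r - k := by
              have := Finset.card_filter_add_card_filter_not
                (s := (Finset.univ : Finset (Fin r))) (p := fun i : Fin r => (i : ℕ) < k)
              rw [Finset.card_univ, Fintype.card_fin, h1] at this
              omega
            rw [Finset.sum_const, Finset.sum_const, h1, h2, smul_eq_mul, smul_eq_mul]
            omega
    -- fibers of f have at most 2 elements
    have hfiber : ∀ g ∈ Fintype.piFinset (fun _ : Fin k => Finset.range q),
        (H.filter (fun A => f A = g)).card ≤ 2 := by
      intro g _
      by_contra h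
      push_neg at h
      obtain ⟨A, hA, B, hB, C, hC, hAB, hAC, hBC⟩ := Finset.two_lt_card.mp h
      rw [Finset.mem_filter] at hA hB hC
      have := hfree A hA.1 B hB.1 C hC.1 hAB hAC hBC
      have h2 := hkey A hA.1 B hB.1 C hC.1 (hA.2.trans hB.2.symm) (hA.2.trans hC.2.symm)
      omega
    have hmaps : ∀ A ∈ H, f A ∈ Fintype.piFinset (fun _ : Fin k => Finset.range q) := by
      intro A hA
      rw [Fintype.mem_piFinset]
      intro i
      obtain ⟨a, ha1, ha⟩ := hsing A hA (Fin.castLE hrk.le i)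
      rw [Finset.mem_range, hf]
      simp only
      rw [ha, Finset.sup_singleton]
      exact a.2.2
    calc H.card ≤ 2 * (Fintype.piFinset (fun _ : Fin k => Finset.range q)).card :=
          Finset.card_le_mul_card_image_of_maps_to hmaps 2 hfiber
      _ = 2 * q ^ k := by rw [Fintype.card_piFinset_const, Finset.card_range]
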